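/- Let T be a triangulated category and S a thick subcategory. Then the following are equivalent: (1) the sequence S → T → T/S (inclusion followed by the Verdier quotient functor) is a localization sequence; (2) the inclusion functor S → T has a right adjoint; (3) the quotient functor T → T/S has a right adjoint. -/

import Mathlib

open CategoryTheory CategoryTheory.Limits CategoryTheory.Pretriangulated Opposite

universe v u

namespace Krause

variable (A : Type u) [Category.{v} A] [Abelian A]

/-- The homotopy category of unbounded cochain complexes. -/
abbrev HtpyCat := HomotopyCategory A (ComplexShape.up ℤ)

variable [HasColimits A]

/-- A locally noetherian Grothendieck category: an abelian category with (small) colimits,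
exact filtered colimits (AB5) and a generating set of noetherian objects. -/
class LocallyNoetherianGrothendieck : Prop where
  ab5 : ∀ (J : Type v) [SmallCategory J] [IsFiltered J],
    PreservesFiniteLimits (colim (J := J) (C := A))
  exists_noetherian_generators : ∃ G : Set A, (∀ X ∈ G, IsNoetherianObject X) ∧
    ∀ X : A, ∃ (ι : Type v) (g : ι → A), (∀ i, g i ∈ G) ∧ ∃ (π : (∐ g) ⟶ X), Epi π

variable {A}

/-- A complex with injective components. -/
def DegreewiseInjective (X : HtpyCat A) : Prop := ∀ n : ℤ, Injective (X.as.X n)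

/-- An acyclic complex. -/
def IsAcyclicK (X : HtpyCat A) : Prop :=
  ∀ n : ℤ, IsZero ((HomotopyCategory.homologyFunctor A (ComplexShape.up ℤ) n).obj X)

/-- A compact object: `Hom(X, -)` preserves coproducts. -/
def IsCompactObj {C : Type*} [Category.{v} C] (X : C) : Prop :=
  ∀ ι : Type v, Nonempty (PreservesColimitsOfShape (Discrete ι) (coyoneda.obj (op X)))

/-- compactly generated triangulated category -/
def IsCompactlyGenerated (T : Type*) [Category.{v} T] [HasZeroMorphisms T] [HasShift T ℤ] : Prop :=
  ∃ G : Set T, (∀ X ∈ G, IsCompactObj X) ∧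
    ∀ Y : T, (∀ X ∈ G, ∀ n : ℤ, ∀ f : X ⟶ (Y⟦n⟧), f = 0) → IsZero Y

/-- The homotopy category of complexes of injectives, `K(Inj A)`. -/
abbrev KInj := ObjectProperty.FullSubcategory (DegreewiseInjective (A := A))

/-- The stable derived category `S(A)`: acyclic complexes of injectives. -/
abbrev SCat := ObjectProperty.FullSubcategory (fun X : HtpyCat A => DegreewiseInjective X ∧ IsAcyclicK X)

variable (A) in
/-- The canonical functor `Q : K(Inj A) ⥤ D(A)`. -/
noncomputable def QInj [HasDerivedCategory.{v} A] : KInj (A := A) ⥤ DerivedCategory A :=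
  ObjectProperty.ι _ ⋙ DerivedCategory.Qh

variable (A) in
/-- The inclusion `I : S(A) ⥤ K(Inj A)`. -/
def IInc : SCat (A := A) ⥤ KInj (A := A) :=
  ObjectProperty.lift _ (ObjectProperty.ι _) (fun X => X.2.1)

end Krause

namespace Krause

/-- The data exhibiting `(F, G)` as a localization sequence. -/
structure LocalizationSequence {T₁ : Type*} {T₂ : Type*} {T₃ : Type*}
    [Category T₁] [Category T₂] [Category T₃] (F : T₁ ⥤ T₂) (G : T₂ ⥤ T₃) where
  /-- a right adjoint of `F` -/
  Fρ : T₂ ⥤ T₁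
  adjF : F ⊣ Fρ
  FρF_iso : F ⋙ Fρ ≅ 𝟭 T₁
  /-- a right adjoint of `G` -/
  Gρ : T₃ ⥤ T₂
  adjG : G ⊣ Gρ
  GGρ_iso : Gρ ⋙ G ≅ 𝟭 T₃
  zero_iff : ∀ X : T₂, IsZero (G.obj X) ↔ ∃ Y : T₁, Nonempty (X ≅ F.obj Y)

/-- `(F, G)` is a localization sequence. -/
def IsLocalizationSequence {T₁ : Type*} {T₂ : Type*} {T₃ : Type*}
    [Category T₁] [Category T₂] [Category T₃] (F : T₁ ⥤ T₂) (G : T₂ ⥤ T₃) : Prop :=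
  Nonempty (LocalizationSequence F G)

/-- The data exhibiting `(F, G)` as a colocalization sequence (a localization sequence
of the opposite functors). -/
structure ColocalizationSequence {T₁ : Type*} {T₂ : Type*} {T₃ : Type*}
    [Category T₁] [Category T₂] [Category T₃] (F : T₁ ⥤ T₂) (G : T₂ ⥤ T₃) where
  /-- a left adjoint of `F` -/
  Fl : T₂ ⥤ T₁
  adjF : Fl ⊣ F
  FFl_iso : F ⋙ Fl ≅ 𝟭 T₁
  /-- a left adjoint of `G` -/
  Gl : T₃ ⥤ T₂
  adjG : Gl ⊣ G
  GlG_iso : Gl ⋙ G ≅ 𝟭 T₃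
  zero_iff : ∀ X : T₂, IsZero (G.obj X) ↔ ∃ Y : T₁, Nonempty (X ≅ F.obj Y)

/-- `(F, G)` is a colocalization sequence. -/
def IsColocalizationSequence {T₁ : Type*} {T₂ : Type*} {T₃ : Type*}
    [Category T₁] [Category T₂] [Category T₃] (F : T₁ ⥤ T₂) (G : T₂ ⥤ T₃) : Prop :=
  Nonempty (ColocalizationSequence F G)

end Krause

namespace Krause

namespace Triangulated

/-- A triangulated subcategory (the Mathlib notion `Triangulated.Subcategory` of the older library). -/
structure Subcategory (C : Type*) [Category C] [HasZeroObject C] [HasShift C ℤ] [Preadditive C]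
    [∀ n : ℤ, (shiftFunctor C n).Additive] [Pretriangulated C] where
  P : C → Prop
  zero' : ∃ (Z : C) (_ : IsZero Z), P Z
  shift (X : C) (n : ℤ) : P X → P (X⟦n⟧)
  ext₂' (T : Triangle C) (_ : T ∈ distTriang C) : P T.obj₁ → P T.obj₃ →
    ObjectProperty.isoClosure P T.obj₂

/-- The class of morphisms whose cone is in the subcategory. -/
def Subcategory.W {C : Type*} [Category C] [HasZeroObject C] [HasShift C ℤ] [Preadditive C]
    [∀ n : ℤ, (shiftFunctor C n).Additive] [Pretriangulated C] (S : Subcategory C) :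
    MorphismProperty C :=
  fun X Y f => ∃ (Z : C) (g : Y ⟶ Z) (h : Z ⟶ X⟦(1 : ℤ)⟧)
    (_ : Triangle.mk f g h ∈ distTriang C), S.P Z

end Triangulated

end Krause

namespace Krause.Triangulated.Subcategory
variable {T : Type u} [Category.{v} T] [HasZeroObject T] [Preadditive T]
    [HasShift T ℤ] [∀ n : ℤ, (shiftFunctor T n).Additive] [Pretriangulated T]
    (S : Subcategory T)

lemma W.mk {Tr : Triangle T} (hT : Tr ∈ distTriang T) (h : S.P Tr.obj₃) : S.W Tr.mor₁ :=
  ⟨_, _, _, hT, h⟩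

lemma W.mk' {Tr : Triangle T} (hT : Tr ∈ distTriang T) (h : S.P Tr.obj₁) : S.W Tr.mor₂ :=
  ⟨_, _, _, rot_of_distTriang _ hT, S.shift _ 1 h⟩

instance instIsTriangulatedP : ObjectProperty.IsTriangulated S.P where
  exists_zero := by
    obtain ⟨Z, hZ, h⟩ := S.zero'
    exact ⟨Z, hZ, h⟩
  isStableUnderShiftBy a := ⟨fun X hX => S.shift X a hX⟩
  ext₂' := S.ext₂'

instance [IsTriangulated T] : S.W.HasLeftCalculusOfFractions :=
  (inferInstance : (ObjectProperty.trW (C := T) S.P).HasLeftCalculusOfFractions)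
instance [IsTriangulated T] : S.W.HasRightCalculusOfFractions :=
  (inferInstance : (ObjectProperty.trW (C := T) S.P).HasRightCalculusOfFractions)
instance [IsTriangulated T] : S.W.IsMultiplicative :=
  (inferInstance : (ObjectProperty.trW (C := T) S.P).IsMultiplicative)
instance : S.W.RespectsIso := (inferInstance : (ObjectProperty.trW (C := T) S.P).RespectsIso)
instance : S.W.ContainsIdentities := (inferInstance : (ObjectProperty.trW (C := T) S.P).ContainsIdentities)
instance : S.W.IsCompatibleWithShift ℤ := (inferInstance : (ObjectProperty.trW (C := T) S.P).IsCompatibleWithShift ℤ)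
instance [IsTriangulated T] : S.W.IsCompatibleWithTriangulation :=
  (inferInstance : (ObjectProperty.trW (C := T) S.P).IsCompatibleWithTriangulation)

end Krause.Triangulated.Subcategory


section KrauseAuxSec
open ZeroObject
open Krause
set_option linter.unusedSectionVars false
set_option maxHeartbeats 1000000
namespace KrauseAux
variable {T : Type u} [Category.{v} T] [HasZeroObject T] [Preadditive T]
    [HasShift T ℤ] [∀ n : ℤ, (shiftFunctor T n).Additive] [Pretriangulated T]
    [IsTriangulated T] (S : Triangulated.Subcategory T)

/-- An object right-orthogonal to `S`. -/
def SLocal (B : T) : Prop := ∀ (Z : T), S.P Z → ∀ (g : Z ⟶ B), g = 0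

variable {S}

lemma SLocal.shift {B : T} (hB : SLocal S B) (n : ℤ) : SLocal S (B⟦n⟧) := by
  intro Z hZ u
  have h1 : u⟦-n⟧' ≫ (shiftFunctorCompIsoId T n (-n) (add_neg_cancel n)).hom.app B = 0 :=
    hB _ (S.shift Z (-n) hZ) _
  rw [CategoryTheory.Preadditive.IsIso.comp_right_eq_zero] at h1
  exact (shiftFunctor T (-n)).map_eq_zero_iff.1 h1

lemma SLocal.precomp_bijective {Y Y' : T} {s : Y ⟶ Y'} (hs : S.W s) {B : T}
    (hB : SLocal S B) : Function.Bijective (fun g : Y' ⟶ B => s ≫ g) := by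
  obtain ⟨Z, g₀, h₀, hTri, hZ⟩ := hs
  constructor
  · intro u v huv
    have h1 : s ≫ (u - v) = 0 := by
      dsimp at huv
      rw [Preadditive.comp_sub, huv, sub_self]
    obtain ⟨w, hw⟩ := Triangle.yoneda_exact₂ _ hTri (u - v) h1
    rw [hB _ hZ w] at hw
    exact sub_eq_zero.1 (hw.trans comp_zero)
  · intro u
    have hTri' := inv_rot_of_distTriang _ hTri
    obtain ⟨w, hw⟩ := Triangle.yoneda_exact₂ _ hTri' u (hB _ (S.shift Z (-1) hZ) _)
    exact ⟨w, hw.symm⟩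

lemma SLocal.retraction {B B'' : T} {s : B ⟶ B''} (hs : S.W s) (hB : SLocal S B) :
    ∃ t : B'' ⟶ B, s ≫ t = 𝟙 B :=
  (hB.precomp_bijective hs).2 (𝟙 B)

lemma SLocal.map_bijective {B : T} (hB : SLocal S B) (X : T) :
    Function.Bijective (fun f : X ⟶ B => S.W.Q.map f) := by
  constructor
  · intro f f' h
    rw [MorphismProperty.map_eq_iff_postcomp S.W.Q S.W] at h
    obtain ⟨Z, s, hs, hfs⟩ := h
    obtain ⟨t, ht⟩ := SLocal.retraction hs hB
    have : f ≫ s ≫ t = f' ≫ s ≫ t := by rw [← Category.assoc, hfs, Category.assoc]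
    simpa [ht] using this
  · intro φ
    obtain ⟨ψ, hψ⟩ := Localization.exists_leftFraction S.W.Q S.W φ
    obtain ⟨t, ht⟩ := SLocal.retraction ψ.hs hB
    refine ⟨ψ.f ≫ t, ?_⟩
    have h1 := ψ.map_comp_map_s S.W.Q (Localization.inverts S.W.Q S.W)
    dsimp
    rw [hψ, CategoryTheory.Functor.map_comp, ← h1, Category.assoc,
      ← CategoryTheory.Functor.map_comp, ht, CategoryTheory.Functor.map_id, Category.comp_id]

lemma isZero_Q_obj_iff [ObjectProperty.IsClosedUnderIsomorphisms S.P]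
    (hthick : ∀ (X Y : T) (i : X ⟶ Y) (r : Y ⟶ X), i ≫ r = 𝟙 X → S.P Y → S.P X)
    (X : T) : IsZero (S.W.Q.obj X) ↔ S.P X := by
  constructor
  · intro h
    have h0 : S.W.Q.map (𝟙 X) = S.W.Q.map (0 : X ⟶ X) := by
      rw [CategoryTheory.Functor.map_id, S.W.Q.map_zero, h.eq_of_src (𝟙 _) 0]
    rw [MorphismProperty.map_eq_iff_postcomp S.W.Q S.W] at h0
    obtain ⟨Z, s, hs, hfs⟩ := h0
    rw [Category.id_comp, zero_comp] at hfs
    subst hfs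
    obtain ⟨C₀, g, h₀, hTri, hC⟩ := hs
    have hTri' := rot_of_distTriang _ hTri
    obtain ⟨e, he₁, he₂⟩ := exists_iso_binaryBiproduct_of_distTriang _ hTri' (by
      simp only [Triangle.rotate_mor₃, Triangle.mk_mor₁]
      exact neg_eq_zero.2 ((shiftFunctor T 1).map_zero _ _))
    change C₀ ≅ Z ⊞ X⟦(1:ℤ)⟧ at e
    have hret : (biprod.inr ≫ e.inv) ≫ (e.hom ≫ biprod.snd) = 𝟙 (X⟦(1:ℤ)⟧) := by
      rw [Category.assoc, Iso.inv_hom_id_assoc, biprod.inr_snd]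
    have h1 : S.P (X⟦(1:ℤ)⟧) := hthick _ _ _ _ hret hC
    have h2 : S.P ((X⟦(1:ℤ)⟧)⟦(-1:ℤ)⟧) := S.shift _ (-1) h1
    exact ObjectProperty.prop_of_iso S.P ((shiftFunctorCompIsoId T (1:ℤ) (-1) (by omega)).app X) h2
  · intro hX
    have hw : S.W (0 : X ⟶ 0) :=
      Triangulated.Subcategory.W.mk' S (contractible_distinguished X) hX
    have hiso : IsIso (S.W.Q.map (0 : X ⟶ 0)) := Localization.inverts S.W.Q S.W _ hw
    exact IsZero.of_iso (S.W.Q.map_isZero (isZero_zero T)) (asIso (S.W.Q.map (0 : X ⟶ 0)))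

lemma precomp_shift_cancel {A X Z : T} (ε : A ⟶ X)
    (hinj : ∀ Z', S.P Z' → ∀ w w' : Z' ⟶ A, w ≫ ε = w' ≫ ε → w = w')
    (hZ : S.P Z) (v : Z ⟶ A⟦(1:ℤ)⟧) (hv : v ≫ ε⟦(1:ℤ)⟧' = 0) : v = 0 := by
  have hnat := (shiftFunctorCompIsoId T (1:ℤ) (-1:ℤ) (by omega)).hom.naturality ε
  simp only [Functor.id_map, Functor.comp_obj, Functor.comp_map] at hnat
  have h1 : (v⟦(-1:ℤ)⟧' ≫ (shiftFunctorCompIsoId T (1:ℤ) (-1:ℤ) (by omega)).hom.app A) ≫ ε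
      = 0 ≫ ε := by
    rw [Category.assoc, ← hnat, zero_comp, ← Category.assoc,
      ← CategoryTheory.Functor.map_comp, hv, CategoryTheory.Functor.map_zero, zero_comp]
  have h2 := hinj _ (S.shift Z (-1) hZ) _ _ h1
  rw [CategoryTheory.Preadditive.IsIso.comp_right_eq_zero] at h2
  exact (shiftFunctor T (-1:ℤ)).map_eq_zero_iff.1 h2

/-- Condition (D): every object sits in a triangle with first term in `S` and
third term right-orthogonal to `S`. -/
def HasLocalTriangles : Prop := ∀ X : T,
  ∃ (A : T) (_ : S.P A) (B : T) (_ : SLocal S B) (f : A ⟶ X) (g : X ⟶ B)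
    (h : B ⟶ A⟦(1:ℤ)⟧), Triangle.mk f g h ∈ distTriang T

variable (S) in
lemma hasLocalTriangles_of_inclusion
    (hadj : (ObjectProperty.ι S.P).IsLeftAdjoint) : HasLocalTriangles (S := S) := by
  obtain ⟨r, ⟨adj⟩⟩ := hadj
  intro X
  set A : T := (ObjectProperty.ι S.P).obj (r.obj X) with hA
  set ε : A ⟶ X := adj.counit.app X with hε
  obtain ⟨B, g, h₀, hTri⟩ := distinguished_cocone_triangle ε
  have hbij : ∀ Z', S.P Z' → Function.Bijective (fun w : Z' ⟶ A => w ≫ ε) := by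
    intro Z' hZ'
    have : (fun w : Z' ⟶ A => w ≫ ε)
        = fun w => (adj.homEquiv ⟨Z', hZ'⟩ X).symm
          ((ObjectProperty.fullyFaithfulι S.P).homEquiv.symm w) := by
      funext w
      rw [Adjunction.homEquiv_counit]
      rfl
    rw [this]
    exact ((ObjectProperty.fullyFaithfulι S.P).homEquiv.symm.trans
      (adj.homEquiv ⟨Z', hZ'⟩ X).symm).bijective
  have hB : SLocal S B := by
    intro Z hZ u
    have hz31 := comp_distTriang_mor_zero₃₁ _ hTri
    change h₀ ≫ ε⟦(1:ℤ)⟧' = 0 at hz31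
    have hv : (u ≫ h₀) ≫ ε⟦(1:ℤ)⟧' = 0 := by
      rw [Category.assoc, hz31, comp_zero]
    have h1 : u ≫ h₀ = 0 :=
      precomp_shift_cancel ε (fun Z' hZ' w w' hww' => (hbij Z' hZ').1 hww') hZ _ hv
    obtain ⟨w, hw⟩ := Triangle.coyoneda_exact₃ _ hTri u h1
    change u = w ≫ g at hw
    change Z ⟶ X at w
    obtain ⟨w', hw'⟩ := (hbij Z hZ).2 w
    dsimp at hw'
    have hz12 := comp_distTriang_mor_zero₁₂ _ hTri
    change ε ≫ g = 0 at hz12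
    exact hw.trans ((congrArg (· ≫ g) hw'.symm).trans ((Category.assoc w' ε g).trans
      ((congrArg (w' ≫ ·) hz12).trans comp_zero)))
  exact ⟨A, (r.obj X).property, B, hB, ε, g, h₀, hTri⟩

variable (S) in
lemma inclusion_isLeftAdjoint_of (hD : HasLocalTriangles (S := S)) :
    (ObjectProperty.ι S.P).IsLeftAdjoint := by
  choose A hA B hB f g h hTri using hD
  have key : ∀ (X : T) (Z : ObjectProperty.FullSubcategory S.P),
      Function.Bijective (fun w : Z.obj ⟶ A X => w ≫ f X) := by
    intro X Z
    constructor
    · intro w w' hww'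
      have h1 : (w - w') ≫ f X = 0 := by
        dsimp at hww'
        rw [Preadditive.sub_comp, hww', sub_self]
      obtain ⟨w₀, hw₀⟩ :=
        Triangle.coyoneda_exact₂ _ (inv_rot_of_distTriang _ (hTri X)) (w - w') h1
      rw [SLocal.shift (hB X) (-1) Z.obj Z.property w₀] at hw₀
      exact sub_eq_zero.1 (hw₀.trans zero_comp)
    · intro u
      have h1 : u ≫ g X = 0 := hB X _ Z.property _
      obtain ⟨w, hw⟩ := Triangle.coyoneda_exact₂ _ (hTri X) u h1
      exact ⟨w, hw.symm⟩
  refine ⟨_, ⟨Adjunction.adjunctionOfEquivRight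
    (G_obj := fun X => (⟨A X, hA X⟩ : ObjectProperty.FullSubcategory S.P))
    (fun Z X => (Equiv.ofBijective (fun w : Z.obj ⟶ A X => w ≫ f X) (key X Z)).symm.trans
      ((ObjectProperty.fullyFaithfulι S.P).homEquiv (X := Z)
        (Y := ⟨A X, hA X⟩)).symm) ?_⟩⟩
  intro Z' Z X φ u
  apply ObjectProperty.hom_ext
  change (Equiv.ofBijective (fun w : Z'.obj ⟶ A X => w ≫ f X) (key X Z')).symm
      ((ObjectProperty.ι S.P).map φ ≫ u) = (ObjectProperty.ι S.P).map φ ≫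
      (Equiv.ofBijective (fun w : Z.obj ⟶ A X => w ≫ f X) (key X Z)).symm u
  rw [Equiv.symm_apply_eq]
  have h2 : ((Equiv.ofBijective (fun w : Z.obj ⟶ A X => w ≫ f X) (key X Z)).symm u
      : Z.obj ⟶ A X) ≫ f X = u :=
    (Equiv.ofBijective (fun w : Z.obj ⟶ A X => w ≫ f X) (key X Z)).apply_symm_apply u
  have h3 : ((ObjectProperty.ι S.P).map φ) ≫
      (((Equiv.ofBijective (fun w : Z.obj ⟶ A X => w ≫ f X) (key X Z)).symm u
        : Z.obj ⟶ A X) ≫ f X)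
      = (((ObjectProperty.ι S.P).map φ) ≫
        ((Equiv.ofBijective (fun w : Z.obj ⟶ A X => w ≫ f X) (key X Z)).symm u
          : Z.obj ⟶ A X)) ≫ f X := (Category.assoc _ _ _).symm
  rw [h2] at h3
  exact h3
end KrauseAux
namespace KrauseAux
variable {T : Type u} [Category.{v} T] [HasZeroObject T] [Preadditive T]
    [HasShift T ℤ] [∀ n : ℤ, (shiftFunctor T n).Additive] [Pretriangulated T]
    [IsTriangulated T] {S : Triangulated.Subcategory T}

variable (S) in
lemma quotient_adjunction (hD : HasLocalTriangles (S := S)) :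
    ∃ (R : S.W.Localization ⥤ T) (_ : S.W.Q ⊣ R), ∀ Y, SLocal S (R.obj Y) := by
  choose A hA B hB f g h hTri using hD
  have hWg : ∀ X : T, S.W (g X) := fun X =>
    Triangulated.Subcategory.W.mk S (rot_of_distTriang _ (hTri X)) (S.shift _ 1 (hA X))
  haveI := Localization.essSurj S.W.Q S.W
  have hQg : ∀ X, IsIso (S.W.Q.map (g X)) := fun X => Localization.inverts S.W.Q S.W _ (hWg X)
  let XY : S.W.Localization → T := fun Y => S.W.Q.objPreimage Y
  let cIso : ∀ Y : S.W.Localization, S.W.Q.obj (B (XY Y)) ≅ Y := fun Y =>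
    (@asIso _ _ _ _ _ (hQg (XY Y))).symm ≪≫ S.W.Q.objObjPreimageIso Y
  let E : ∀ (X : T) (Y : S.W.Localization), (X ⟶ B (XY Y)) ≃ (S.W.Q.obj X ⟶ Y) := fun X Y =>
    (Equiv.ofBijective _ ((hB (XY Y)).map_bijective X)).trans
      ⟨fun ψ => ψ ≫ (cIso Y).hom, fun φ => φ ≫ (cIso Y).inv,
        fun ψ => by simp, fun φ => by simp⟩
  refine ⟨_, Adjunction.adjunctionOfEquivRight (G_obj := fun Y => B (XY Y))
      (fun X Y => (E X Y).symm) ?_, fun Y => hB (XY Y)⟩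
  intro X' X Y φ u
  rw [Equiv.symm_apply_eq]
  have h2 : S.W.Q.map ((E X Y).symm u) ≫ (cIso Y).hom = u := (E X Y).apply_symm_apply u
  have h3 : S.W.Q.map (φ ≫ (E X Y).symm u) ≫ (cIso Y).hom
      = S.W.Q.map φ ≫ (S.W.Q.map ((E X Y).symm u) ≫ (cIso Y).hom) := by
    rw [CategoryTheory.Functor.map_comp, Category.assoc]
  rw [h2] at h3
  exact h3.symm

lemma isIso_counit_app {R : S.W.Localization ⥤ T} (adj : S.W.Q ⊣ R) (Y : S.W.Localization)
    (hloc : SLocal S (R.obj Y)) : IsIso (adj.counit.app Y) := by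
  haveI := Localization.essSurj S.W.Q S.W
  apply isIso_of_yoneda_map_bijective
  intro P
  dsimp only [Functor.comp_obj, Functor.id_obj]
  set XP := S.W.Q.objPreimage P with hXPdef
  set eP : S.W.Q.obj XP ≅ P := S.W.Q.objObjPreimageIso P with hePdef
  have h1 : Function.Bijective (fun ψ : XP ⟶ R.obj Y => S.W.Q.map ψ) := hloc.map_bijective XP
  have h2 : Function.Bijective
      (fun ψ : XP ⟶ R.obj Y => S.W.Q.map ψ ≫ adj.counit.app Y) := by
    have he : (fun ψ : XP ⟶ R.obj Y => S.W.Q.map ψ ≫ adj.counit.app Y)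
        = fun ψ => (adj.homEquiv XP Y).symm ψ := by
      funext ψ
      rw [Adjunction.homEquiv_counit]
    rw [he]
    exact (adj.homEquiv XP Y).symm.bijective
  have h3 : Function.Bijective
      (fun x : S.W.Q.obj XP ⟶ S.W.Q.obj (R.obj Y) => x ≫ adj.counit.app Y) :=
    (Function.Bijective.of_comp_iff _ h1).1 h2
  have e1 : Function.Bijective (fun x : P ⟶ S.W.Q.obj (R.obj Y) => eP.hom ≫ x) :=
    ⟨fun a b hab => by simpa using congrArg (fun t => eP.inv ≫ t) hab,
      fun y => ⟨eP.inv ≫ y, by simp⟩⟩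
  have e2 : Function.Bijective (fun z : S.W.Q.obj XP ⟶ Y => eP.inv ≫ z) :=
    ⟨fun a b hab => by simpa using congrArg (fun t => eP.hom ≫ t) hab,
      fun y => ⟨eP.hom ≫ y, by simp⟩⟩
  have hcomp := Function.Bijective.comp e2 (Function.Bijective.comp h3 e1)
  have he : (fun x : P ⟶ S.W.Q.obj (R.obj Y) => x ≫ adj.counit.app Y)
      = ((fun z : S.W.Q.obj XP ⟶ Y => eP.inv ≫ z) ∘
        ((fun x : S.W.Q.obj XP ⟶ S.W.Q.obj (R.obj Y) => x ≫ adj.counit.app Y) ∘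
          (fun x : P ⟶ S.W.Q.obj (R.obj Y) => eP.hom ≫ x))) := by
    funext x
    simp
  rw [he]
  exact hcomp

variable (S) in
lemma hasLocalTriangles_of_quotient [ObjectProperty.IsClosedUnderIsomorphisms S.P]
    (hthick : ∀ (X Y : T) (i : X ⟶ Y) (r : Y ⟶ X), i ≫ r = 𝟙 X → S.P Y → S.P X)
    (hadj : (S.W.Q).IsLeftAdjoint) : HasLocalTriangles (S := S) := by
  obtain ⟨R, ⟨adj⟩⟩ := hadj
  intro X
  set B := R.obj (S.W.Q.obj X) with hBdef
  set η : X ⟶ B := adj.unit.app X with hηdef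
  have hB : SLocal S B := by
    intro Z hZ u
    have hz : IsZero (S.W.Q.obj Z) := (isZero_Q_obj_iff hthick Z).2 hZ
    apply (adj.homEquiv Z (S.W.Q.obj X)).symm.injective
    apply hz.eq_of_src
  obtain ⟨A, fA, h3, hTri⟩ := distinguished_cocone_triangle₁ η
  haveI hε : IsIso (adj.counit.app (S.W.Q.obj X)) := isIso_counit_app adj _ hB
  haveI hQη : IsIso (S.W.Q.map η) := by
    have hlt := adj.left_triangle_components X
    haveI : IsIso (S.W.Q.map η ≫ adj.counit.app (S.W.Q.obj X)) := by
      rw [hlt]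
      infer_instance
    exact IsIso.of_isIso_comp_right (S.W.Q.map η) (adj.counit.app (S.W.Q.obj X))
  have hmap := S.W.Q.map_distinguished _ hTri
  have hzA : IsZero (S.W.Q.obj A) := Triangle.isZero₁_of_isIso₂ _ hmap hQη
  exact ⟨A, (isZero_Q_obj_iff hthick A).1 hzA, B, hB, fA, η, h3, hTri⟩

end KrauseAux

end KrauseAuxSec

namespace Krause

/-- for a thick subcategory `S` of a triangulated category `T`, the sequence
`S ⥤ T ⥤ T/S` is a localization sequence iff the inclusion has a right adjoint iff the
Verdier quotient functor has a right adjoint. -/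
theorem statement3 {T : Type u} [Category.{v} T] [HasZeroObject T] [Preadditive T]
    [HasShift T ℤ] [∀ n : ℤ, (shiftFunctor T n).Additive] [Pretriangulated T]
    [IsTriangulated T] (S : Triangulated.Subcategory T) [ObjectProperty.IsClosedUnderIsomorphisms S.P]
    (hthick : ∀ (X Y : T) (i : X ⟶ Y) (r : Y ⟶ X), i ≫ r = 𝟙 X → S.P Y → S.P X) :
    (IsLocalizationSequence (ObjectProperty.ι S.P) S.W.Q ↔
      (ObjectProperty.ι S.P).IsLeftAdjoint) ∧
    ((ObjectProperty.ι S.P).IsLeftAdjoint ↔ (S.W.Q).IsLeftAdjoint) := by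
  have lift_adj : (ObjectProperty.ι S.P).IsLeftAdjoint →
      IsLocalizationSequence (ObjectProperty.ι S.P) S.W.Q := by
    intro h
    obtain ⟨r, ⟨adjF⟩⟩ := h.exists_rightAdjoint
    have hD := KrauseAux.hasLocalTriangles_of_inclusion S ⟨⟨r, ⟨adjF⟩⟩⟩
    obtain ⟨R, adjG, hloc⟩ := KrauseAux.quotient_adjunction S hD
    haveI : ∀ Y, IsIso (adjG.counit.app Y) := fun Y =>
      KrauseAux.isIso_counit_app adjG Y (hloc Y)
    haveI : IsIso adjG.counit := NatIso.isIso_of_isIso_app _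
    refine ⟨{
      Fρ := r
      adjF := adjF
      FρF_iso := (asIso adjF.unit).symm
      Gρ := R
      adjG := adjG
      GGρ_iso := asIso adjG.counit
      zero_iff := ?_ }⟩
    intro X
    rw [KrauseAux.isZero_Q_obj_iff hthick X]
    constructor
    · intro hX
      exact ⟨⟨X, hX⟩, ⟨Iso.refl X⟩⟩
    · rintro ⟨Y, ⟨e⟩⟩
      exact ObjectProperty.prop_of_iso S.P e.symm Y.property
  constructor
  · constructor
    · rintro ⟨L⟩
      exact ⟨L.Fρ, ⟨L.adjF⟩⟩
    · exact lift_adj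
  · constructor
    · intro h
      obtain ⟨R, adjG, _⟩ := KrauseAux.quotient_adjunction S
        (KrauseAux.hasLocalTriangles_of_inclusion S h)
      exact ⟨R, ⟨adjG⟩⟩
    · intro h
      exact KrauseAux.inclusion_isLeftAdjoint_of S
        (KrauseAux.hasLocalTriangles_of_quotient S hthick h)


end Krause
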